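/- arXiv:2203.00076 — 3 statements merged into one kernel-verified Lean document; each statement's English description precedes it below -/
import Mathlib

section
/- For any positive reals x, y, z with x^y ≤ z · log x, it holds that x < ((2z/y) · log(2z/y))^{1/y} and moreover ((2z/y) · log(2z/y))^{1/y} < (2z/y)^{2/y}. -/
private lemma loglt {u : ℝ} (hu : 0 < u) : Real.log u < u := by
  rcases eq_or_ne u 1 with rfl | hne
  · simp
  · have := Real.log_lt_sub_one_of_pos hu hne
    linarith

/-- Log-inversion lemma: if x^y ≤ z·log x for positive reals x, y, z, then
    x < ((2z/y)·log(2z/y))^{1/y} and ((2z/y)·log(2z/y))^{1/y} < (2z/y)^{2/y}. -/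
theorem stmt_1 (x y z : ℝ) (hx : 0 < x) (hy : 0 < y) (hz : 0 < z)
    (h : x ^ y ≤ z * Real.log x) :
    x < ((2 * z / y) * Real.log (2 * z / y)) ^ (1 / y) ∧
      ((2 * z / y) * Real.log (2 * z / y)) ^ (1 / y) < (2 * z / y) ^ (2 / y) := by
  have hxy0 : 0 < x ^ y := Real.rpow_pos_of_pos hx y
  have hlogx : 0 < Real.log x := by
    by_contra hle
    push_neg at hle
    nlinarith [mul_nonpos_of_nonneg_of_nonpos hz.le hle]
  have hx1 : 1 < x := by
    by_contra hle
    push_neg at hle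
    have := Real.log_nonpos (by positivity) hle
    linarith
  set a := z / y with ha
  have ha0 : 0 < a := div_pos hz hy
  set t := x ^ y with ht
  have hlogt : Real.log t = y * Real.log x := Real.log_rpow hx y
  have ht1 : 1 < t := (Real.one_lt_rpow_iff_of_pos hx).mpr (Or.inl ⟨hx1, hy⟩)
  have ht0 : 0 < t := hxy0
  have hlogt0 : 0 < Real.log t := Real.log_pos ht1
  have hta : t ≤ a * Real.log t := by
    rw [hlogt, ha]
    have : z / y * (y * Real.log x) = z * Real.log x := by
      field_simp
    rw [this]; exact h
  have ha1 : 1 < a := by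
    nlinarith [loglt ht0]
  set w : ℝ := 2 * a with hw
  have hweq : 2 * z / y = w := by rw [hw, ha]; ring
  have hw2 : 2 < w := by rw [hw]; linarith
  have hw0 : 0 < w := by linarith
  have hlogw : 0 < Real.log w := Real.log_pos (by linarith)
  have hkey : t < w * Real.log w := by
    by_cases htw : t ≤ w
    · have hlt : Real.log t ≤ Real.log w := Real.log_le_log ht0 htw
      nlinarith
    · push_neg at htw
      by_contra hcon
      push_neg at hcon
      -- hcon : w * Real.log w ≤ t
      have hL2 : 2 * Real.log w ≤ Real.log t := by
        have : w * Real.log w ≤ a * Real.log t := le_trans hcon hta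
        rw [hw] at this
        nlinarith
      have hts : w ^ 2 ≤ t := by
        have h1 : Real.log (w ^ 2) = 2 * Real.log w := by
          rw [Real.log_pow]; push_cast; ring
        have := Real.exp_le_exp.mpr (h1 ▸ hL2)
        rwa [Real.exp_log (by positivity), Real.exp_log ht0] at this
      have hs0 : (0:ℝ) < w ^ 2 := by positivity
      have hdiv : Real.log t - Real.log (w ^ 2) ≤ t / w ^ 2 - 1 := by
        have := Real.log_le_sub_one_of_pos (show 0 < t / w ^ 2 by positivity)
        rwa [Real.log_div ht0.ne' hs0.ne'] at this
      have h2 : w ^ 2 * (Real.log t - Real.log (w ^ 2)) ≤ t - w ^ 2 := by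
        have := mul_le_mul_of_nonneg_left hdiv hs0.le
        calc w ^ 2 * (Real.log t - Real.log (w ^ 2))
            ≤ w ^ 2 * (t / w ^ 2 - 1) := this
          _ = t - w ^ 2 := by field_simp
      have hls : Real.log (w ^ 2) = 2 * Real.log w := by
        rw [Real.log_pow]; push_cast; ring
      rw [hls] at h2
      have hlw : Real.log w < w := loglt hw0
      have hta' : 2 * t ≤ w * Real.log t := by rw [hw]; linarith
      nlinarith [mul_le_mul_of_nonneg_left h2 hw0.le,
        mul_le_mul_of_nonneg_left hta' (sq_nonneg w),
        mul_pos (pow_pos hw0 3) (sub_pos.mpr hlw),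
        mul_nonneg (sub_nonneg.mpr hts) (by nlinarith : (0:ℝ) ≤ 2 * w - 1)]
  have hWL0 : 0 < w * Real.log w := by positivity
  have hy' : 0 < 1 / y := by positivity
  constructor
  · have hxeq : x = t ^ (1 / y) := by
      rw [ht, ← Real.rpow_mul hx.le, mul_one_div, div_self hy.ne', Real.rpow_one]
    rw [hxeq, hweq]
    exact Real.rpow_lt_rpow ht0.le hkey hy'
  · rw [hweq]
    have h2y : (2 : ℝ) / y = 2 * (1 / y) := by ring
    have hrw : w ^ ((2:ℝ) / y) = (w ^ (2:ℝ)) ^ (1 / y) := by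
      rw [h2y, Real.rpow_mul hw0.le]
    rw [hrw]
    apply Real.rpow_lt_rpow hWL0.le _ hy'
    have : w ^ (2:ℝ) = w * w := by
      rw [show (2:ℝ) = ((2:ℕ):ℝ) by norm_num, Real.rpow_natCast]; ring
    rw [this]
    exact (mul_lt_mul_iff_right₀ hw0).mpr (loglt hw0)
end

section
/- Define J_1 = 2^8 and J_{l+1} = (J_l + 2)^2, and let h(j) = 12·log(j)/(j − 2). Then for every integer l ≥ 2, h(J_l) < 2^{-2^{l+1}}. -/
/-- With J_1 = 2^8, J_{l+1} = (J_l + 2)^2, and h(j) = 12·log(j)/(j − 2):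
    for every l ≥ 2, h(J_l) < 2^{−2^{l+1}}. -/
theorem stmt_8 (J : ℕ → ℕ) (h1 : J 1 = 2 ^ 8) (hrec : ∀ l : ℕ, 1 ≤ l → J (l + 1) = (J l + 2) ^ 2)
    (l : ℕ) (hl : 2 ≤ l) :
    12 * Real.log (J l) / ((J l : ℝ) - 2) < 1 / 2 ^ (2 ^ (l + 1)) := by
  have jlow : ∀ k : ℕ, 1 ≤ k → 2 ^ (2 ^ (k + 2)) ≤ J k := by
    intro k hk
    induction k, hk using Nat.le_induction with
    | base => rw [h1]; norm_num
    | succ n hn ih =>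
      rw [hrec n hn]
      calc 2 ^ (2 ^ (n + 1 + 2)) = (2 ^ (2 ^ (n + 2))) ^ 2 := by
            rw [← pow_mul, ← pow_succ]
      _ ≤ (J n) ^ 2 := Nat.pow_le_pow_left ih 2
      _ ≤ (J n + 2) ^ 2 := Nat.pow_le_pow_left (Nat.le_add_right _ _) 2
  induction l, hl using Nat.le_induction with
  | base =>
    have hJ2 : J 2 = 66564 := by rw [hrec 1 le_rfl, h1]; norm_num
    rw [hJ2]
    have hlog : Real.log 66564 < 17 * Real.log 2 := by
      have h := Real.log_lt_log (show (0:ℝ) < 66564 by norm_num)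
        (show (66564:ℝ) < 2 ^ 17 by norm_num)
      rw [Real.log_pow] at h
      push_cast at h
      linarith
    have h2 := Real.log_two_lt_d9
    rw [div_lt_div_iff₀ (by norm_num) (by norm_num)]
    push_cast
    nlinarith
  | succ n hn ih =>
    set a : ℝ := (J n : ℝ) with ha_def
    set S : ℝ := (2 : ℝ) ^ (2 ^ (n + 1)) with hS_def
    have hSpos : (0:ℝ) < S := by positivity
    have hS256 : (256:ℝ) ≤ S := by
      rw [hS_def]
      calc (256:ℝ) = 2 ^ 8 := by norm_num
      _ ≤ 2 ^ (2 ^ (n + 1)) := by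
        apply pow_le_pow_right₀ (by norm_num)
        calc 8 = 2 ^ 3 := rfl
        _ ≤ 2 ^ (n + 1) := Nat.pow_le_pow_right (by norm_num) (by omega)
    have hSa : S ^ 2 ≤ a := by
      have := jlow n (by omega)
      have h2 : (2:ℝ) ^ (2 ^ (n + 2)) ≤ a := by rw [ha_def]; exact_mod_cast this
      calc S ^ 2 = 2 ^ (2 ^ (n + 2)) := by
            rw [hS_def, ← pow_mul, ← pow_succ]
      _ ≤ a := h2
    have ha65536 : (65536:ℝ) ≤ a := by nlinarith
    have hapos : (0:ℝ) < a := by linarith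
    have ha2pos : (0:ℝ) < a - 2 := by linarith
    have hb : (J (n + 1) : ℝ) = (a + 2) ^ 2 := by
      rw [hrec n (by omega)]; push_cast; ring
    have hbpos : (0:ℝ) < (a + 2) ^ 2 - 2 := by nlinarith
    have hLpos : 0 < Real.log a := Real.log_pos (by linarith)
    have hlogb : Real.log ((a + 2) ^ 2) ≤ 4 * Real.log a := by
      rw [Real.log_pow]
      have h1 : Real.log (a + 2) ≤ Real.log (a ^ 2) :=
        Real.log_le_log (by linarith) (by nlinarith)
      rw [Real.log_pow] at h1
      push_cast at h1 ⊢
      linarith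
    have hIH : 12 * Real.log a * S < (a - 2) := by
      rw [div_lt_div_iff₀ ha2pos hSpos] at ih
      linarith
    have hSS : (2:ℝ) ^ (2 ^ (n + 1 + 1)) = S ^ 2 := by
      rw [hS_def, ← pow_mul, ← pow_succ]
    rw [hb, hSS, div_lt_div_iff₀ hbpos (by positivity)]
    have h4S : (0:ℝ) < 4 * S := by linarith
    have key : 48 * Real.log a * S ^ 2 < 4 * S * (a - 2) := by nlinarith
    have haS : 256 * S ≤ a := by nlinarith
    nlinarith [mul_pos hSpos hLpos, mul_pos hapos hSpos]
end

section
/- Let A ⊆ ℝ be a finite set with |A| ≤ K for some K ≥ 1, and let (a_j)_{j≥0} be a sequence taking values in A such that a_{j+1} ≥ a_j − δ_j for every j, where δ_j ≥ 0. Then for any indices j ≤ j', a_{j'} ≥ a_j − (K − 1) · sup_{j ≤ j'' < j'} δ_{j''}. -/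
/-- If a sequence takes at most K distinct values and never decreases by more than δ_j in one
    step, then over any interval it decreases by at most (K−1)·sup of the per-step bounds. -/
theorem stmt_11 (A : Finset ℝ) (K : ℕ) (hK : 1 ≤ K) (hcard : A.card ≤ K)
    (a : ℕ → ℝ) (ha : ∀ j, a j ∈ A) (δ : ℕ → ℝ) (hδ : ∀ j, 0 ≤ δ j)
    (hstep : ∀ j, a (j + 1) ≥ a j - δ j) (j j' : ℕ) (hjj' : j ≤ j') :
    a j' ≥ a j - ((K : ℝ) - 1) * sSup (δ '' Set.Ico j j') := by
  rcases eq_or_lt_of_le hjj' with rfl | hlt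
  · simp [Set.Ico_self, Real.sSup_empty]
  set D := sSup (δ '' Set.Ico j j') with hDdef
  have hbdd : BddAbove (δ '' Set.Ico j j') := ((Set.finite_Ico j j').image δ).bddAbove
  have hD : ∀ i, j ≤ i → i < j' → δ i ≤ D := fun i h1 h2 =>
    le_csSup hbdd ⟨i, ⟨h1, h2⟩, rfl⟩
  have hD0 : 0 ≤ D := le_trans (hδ j) (hD j le_rfl hlt)
  have key : ∀ i, j ≤ i → i ≤ j' →
      ∀ hne : ((Finset.Icc j i).image a).Nonempty,
      a j - ((((Finset.Icc j i).image a).card : ℝ) - 1) * D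
        ≤ ((Finset.Icc j i).image a).min' hne := by
    intro i hji
    induction i, hji using Nat.le_induction with
    | base =>
      intro _ hne
      simp [Finset.Icc_self]
    | succ i hji ih =>
      intro hi1 hne
      have hij' : i < j' := hi1
      have hmemj : a j ∈ (Finset.Icc j i).image a :=
        Finset.mem_image.2 ⟨j, Finset.mem_Icc.2 ⟨le_rfl, hji⟩, rfl⟩
      have hne' : ((Finset.Icc j i).image a).Nonempty := ⟨a j, hmemj⟩
      have ihh := ih (le_of_lt hij') hne'
      set S := (Finset.Icc j i).image a with hS
      set m := S.min' hne' with hm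
      have hIcc : Finset.Icc j (i+1) = insert (i+1) (Finset.Icc j i) :=
        (Finset.insert_Icc_right_eq_Icc_add_one (le_trans hji (Nat.le_succ i))).symm
      have himg : (Finset.Icc j (i+1)).image a = insert (a (i+1)) S := by
        rw [hIcc, Finset.image_insert]
      have hai : a i ∈ S := Finset.mem_image.2 ⟨i, Finset.mem_Icc.2 ⟨hji, le_rfl⟩, rfl⟩
      have hmai : m ≤ a i := Finset.min'_le _ _ hai
      have hstep' : a (i+1) ≥ m - D := by
        have := hstep i
        have hδi : δ i ≤ D := hD i hji hij'
        linarith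
      rcases le_or_gt m (a (i+1)) with hcase | hcase
      · -- min unchanged
        have hmin : ∀ x ∈ (Finset.Icc j (i+1)).image a, m ≤ x := by
          intro x hx
          rw [himg, Finset.mem_insert] at hx
          rcases hx with rfl | hx
          · exact hcase
          · exact Finset.min'_le _ _ hx
        have h1 : m ≤ ((Finset.Icc j (i+1)).image a).min' hne :=
          Finset.le_min' _ _ _ hmin
        have hcardle : S.card ≤ ((Finset.Icc j (i+1)).image a).card := by
          rw [himg]; exact Finset.card_le_card (Finset.subset_insert _ _)
        have : a j - ((((Finset.Icc j (i+1)).image a).card : ℝ) - 1) * D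
            ≤ a j - ((S.card : ℝ) - 1) * D := by
          have : ((S.card : ℝ) - 1) * D ≤ ((((Finset.Icc j (i+1)).image a).card : ℝ) - 1) * D := by
            apply mul_le_mul_of_nonneg_right _ hD0
            have : (S.card : ℝ) ≤ (((Finset.Icc j (i+1)).image a).card : ℝ) :=
              Nat.cast_le.2 hcardle
            linarith
          linarith
        linarith
      · -- new minimum a (i+1)
        have hnotmem : a (i+1) ∉ S := fun h => absurd (Finset.min'_le _ _ h) (not_le.2 hcase)
        have hcardeq : ((Finset.Icc j (i+1)).image a).card = S.card + 1 := by
          rw [himg, Finset.card_insert_of_notMem hnotmem]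
        have hmin : ∀ x ∈ (Finset.Icc j (i+1)).image a, a (i+1) ≤ x := by
          intro x hx
          rw [himg, Finset.mem_insert] at hx
          rcases hx with rfl | hx
          · exact le_rfl
          · exact le_of_lt (lt_of_lt_of_le hcase (Finset.min'_le _ _ hx))
        have h1 : a (i+1) ≤ ((Finset.Icc j (i+1)).image a).min' hne :=
          Finset.le_min' _ _ _ hmin
        rw [hcardeq]
        push_cast
        linarith
  have hneJ : ((Finset.Icc j j').image a).Nonempty :=
    ⟨a j, Finset.mem_image.2 ⟨j, Finset.mem_Icc.2 ⟨le_rfl, hjj'⟩, rfl⟩⟩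
  have hkey := key j' hjj' le_rfl hneJ
  have hmem : a j' ∈ (Finset.Icc j j').image a :=
    Finset.mem_image.2 ⟨j', Finset.mem_Icc.2 ⟨hjj', le_rfl⟩, rfl⟩
  have h1 : ((Finset.Icc j j').image a).min' hneJ ≤ a j' := Finset.min'_le _ _ hmem
  have hsub : (Finset.Icc j j').image a ⊆ A := by
    intro x hx
    rcases Finset.mem_image.1 hx with ⟨k, _, rfl⟩
    exact ha k
  have hcard' : ((Finset.Icc j j').image a).card ≤ K :=
    le_trans (Finset.card_le_card hsub) hcard
  have h2 : ((((Finset.Icc j j').image a).card : ℝ) - 1) * D ≤ ((K : ℝ) - 1) * D := by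
    apply mul_le_mul_of_nonneg_right _ hD0
    have : (((Finset.Icc j j').image a).card : ℝ) ≤ (K : ℝ) := Nat.cast_le.2 hcard'
    linarith
  linarith
end
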